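/- arXiv:0812.0067 — 3 statements merged into one kernel-verified Lean document; each statement's English description precedes it below -/
import Mathlib

section
/- Let B be a set of monomials connected to 1 and F a rewriting family for B (each f ∈ F has support in B⁺ = B ∪ x_1 B ∪ ... ∪ x_n B, exactly one monomial γ(f) of its support lies in ∂B = B⁺ \ B, with coefficient 1, and distinct elements of F have distinct leading monomials). Let E be the set of monomials m such that for every decomposition m = x_{i_0}···x_{i_k} as a product of variables, the iterated reduction π_F(x_{i_0} π_F(x_{i_1} ··· π_F(x_{i_k})···)) is defined. Then E is stable under monomial division: if m ∈ E and m' divides m, then m' ∈ E. -/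
open MvPolynomial
open scoped Classical

abbrev Mon (n : ℕ) := Fin n →₀ ℕ

def prolong {n : ℕ} (B : Set (Mon n)) : Set (Mon n) :=
  B ∪ ⋃ i : Fin n, (fun m => Finsupp.single i 1 + m) '' B

def border {n : ℕ} (B : Set (Mon n)) : Set (Mon n) := prolong B \ B

noncomputable def varsSum {n : ℕ} (L : List (Fin n)) : Mon n :=
  (L.map fun i => Finsupp.single i 1).sum

def ConnectedTo1 {n : ℕ} (B : Set (Mon n)) : Prop :=
  0 ∈ B ∧ ∀ m ∈ B, ∃ L : List (Fin n), varsSum L = m ∧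
    ∀ L' : List (Fin n), L' <+: L → varsSum L' ∈ B

def degSum {n : ℕ} (m : Mon n) : ℕ := m.sum fun _ e => e
noncomputable def spanMon {n : ℕ} (K : Type) [Field K] (B : Set (Mon n)) :
    Submodule K (MvPolynomial (Fin n) K) :=
  Submodule.span K ((fun m => (monomial m (1 : K) : MvPolynomial (Fin n) K)) '' B)

noncomputable def piF {n : ℕ} {K : Type} [Field K] (B H : Set (Mon n))
    (ρ : Mon n → MvPolynomial (Fin n) K) (p : MvPolynomial (Fin n) K) :
    MvPolynomial (Fin n) K :=
  p.support.sum fun m =>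
    if m ∈ B then monomial m (p.coeff m)
    else if m ∈ H then p.coeff m • ρ m else 0

noncomputable def redList {n : ℕ} {K : Type} [Field K] (B H : Set (Mon n))
    (ρ : Mon n → MvPolynomial (Fin n) K) : List (Fin n) → MvPolynomial (Fin n) K
  | [] => 1
  | i :: L => piF B H ρ (X i * redList B H ρ L)

def DefinedOn {n : ℕ} {K : Type} [Field K] (B H : Set (Mon n))
    (p : MvPolynomial (Fin n) K) : Prop :=
  ↑p.support ⊆ B ∪ H

def RedDefined {n : ℕ} {K : Type} [Field K] (B H : Set (Mon n))
    (ρ : Mon n → MvPolynomial (Fin n) K) : List (Fin n) → Prop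
  | [] => True
  | i :: L => RedDefined B H ρ L ∧ DefinedOn B H (X i * redList B H ρ L)

def Eset {n : ℕ} {K : Type} [Field K] (B H : Set (Mon n))
    (ρ : Mon n → MvPolynomial (Fin n) K) : Set (Mon n) :=
  { m | ∀ L : List (Fin n), varsSum L = m → RedDefined B H ρ L }

lemma varsSum_append {n : ℕ} (L L' : List (Fin n)) :
    varsSum (L ++ L') = varsSum L + varsSum L' := by
  simp [varsSum]

lemma exists_list_varsSum {n : ℕ} (d : Mon n) : ∃ D : List (Fin n), varsSum D = d := by
  induction d using Finsupp.induction with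
  | zero => exact ⟨[], rfl⟩
  | single_add i b f _ _ ih =>
    obtain ⟨D, hD⟩ := ih
    refine ⟨List.replicate b i ++ D, ?_⟩
    rw [varsSum_append, hD]
    congr 1
    simp [varsSum, List.map_replicate, List.sum_replicate]

lemma redDefined_suffix {n : ℕ} {K : Type} [Field K] (B H : Set (Mon n))
    (ρ : Mon n → MvPolynomial (Fin n) K) (D L : List (Fin n))
    (h : RedDefined B H ρ (D ++ L)) : RedDefined B H ρ L := by
  induction D with
  | nil => exact h
  | cons i D ih => exact ih h.1

/-- the set E of monomials on which all iterated reductions by the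
    rewriting family are defined is stable under monomial division. -/
theorem stmt5 {n : ℕ} {K : Type} [Field K] (B H : Set (Mon n))
    (ρ : Mon n → MvPolynomial (Fin n) K)
    (hB : ConnectedTo1 B) (hH : H ⊆ border B)
    (hρ : ∀ h ∈ H, ↑(ρ h).support ⊆ B) :
    ∀ m ∈ Eset B H ρ, ∀ m' : Mon n, m' ≤ m → m' ∈ Eset B H ρ := by
  intro m hm m' hle L' hL'
  obtain ⟨d, hd⟩ := le_iff_exists_add.mp hle
  obtain ⟨D, hD⟩ := exists_list_varsSum d
  refine redDefined_suffix B H ρ D L' (hm (D ++ L') ?_)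
  rw [varsSum_append, hD, hL', hd, add_comm]
end

section
/- Let Λ be a reducing grading and F a reducing family of degree λ for a set B connected to 1 (i.e., F is a rewriting family and every monomial of ∂B of degree ≤ λ is the leading monomial of some element of F). If every f ∈ F satisfies Λ(γ(f)) = Λ(f), then every monomial of degree ≤ λ lies in the set E of monomials on which all iterated reductions are defined; moreover each partial reduction p_k = π_F(x_{i_k} π_F(··· π_F(x_{i_1})···)) satisfies Λ(p_k) ≤ Λ(x_{i_k}···x_{i_1}). -/
open MvPolynomial
open scoped Classical

lemma piF_support_sub {n : ℕ} {K : Type} [Field K] (B H : Set (Mon n))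
    (ρ : Mon n → MvPolynomial (Fin n) K) (p : MvPolynomial (Fin n) K) :
    ∀ m' ∈ (piF B H ρ p).support, ∃ m ∈ p.support,
      (m ∈ B ∧ m' = m) ∨ (m ∈ H ∧ m' ∈ (ρ m).support) := by
  intro m' hm'
  have h := MvPolynomial.support_sum hm'
  rw [Finset.mem_biUnion] at h
  obtain ⟨m, hm, hterm⟩ := h
  refine ⟨m, hm, ?_⟩
  by_cases hmB : m ∈ B
  · left
    refine ⟨hmB, ?_⟩
    rw [if_pos hmB] at hterm
    have := MvPolynomial.support_monomial_subset hterm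
    simpa using this
  · right
    rw [if_neg hmB] at hterm
    by_cases hmH : m ∈ H
    · rw [if_pos hmH] at hterm
      exact ⟨hmH, Finsupp.support_smul hterm⟩
    · rw [if_neg hmH] at hterm
      simp at hterm

lemma Xmul_support_sub {n : ℕ} {K : Type} [Field K] (i : Fin n)
    (p : MvPolynomial (Fin n) K) :
    ∀ m' ∈ (X i * p).support, ∃ m ∈ p.support, m' = Finsupp.single i 1 + m := by
  intro m' hm'
  have h := MvPolynomial.support_mul _ _ hm'
  rw [Finset.mem_add] at h
  obtain ⟨a, ha, b, hb, hab⟩ := h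
  rw [MvPolynomial.support_X, Finset.mem_singleton] at ha
  exact ⟨b, hb, by rw [← hab, ha]⟩

lemma varsSum_cons {n : ℕ} (i : Fin n) (L : List (Fin n)) :
    varsSum (i :: L) = Finsupp.single i 1 + varsSum L := by
  simp [varsSum]

/-- for a reducing family of degree λ (with respect to a reducing grading)
    whose leading monomials have maximal degree, every monomial of degree ≤ λ lies in E,
    and each partial reduction has degree bounded by the degree of the product reduced. -/
theorem stmt7 {n : ℕ} {K : Type} [Field K] {Λ : Type} [AddCommMonoid Λ] [LinearOrder Λ] [IsOrderedAddMonoid Λ]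
    (deg : Mon n → Λ)
    (hdeg : ∀ a b : Mon n, deg (a + b) = deg a + deg b)
    (hredgrad : ∀ a b : Mon n, a ≤ b → a ≠ b → deg a < deg b)
    (B H : Set (Mon n)) (ρ : Mon n → MvPolynomial (Fin n) K) (lam : Λ)
    (hB : ConnectedTo1 B) (hH : H ⊆ border B)
    (hρ : ∀ h ∈ H, ↑(ρ h).support ⊆ B)
    (hredfam : ∀ m ∈ border B, deg m ≤ lam → m ∈ H)
    (hlead : ∀ h ∈ H, ∀ m ∈ (ρ h).support, deg m ≤ deg h) :
    (∀ m : Mon n, deg m ≤ lam → m ∈ Eset B H ρ) ∧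
    (∀ L : List (Fin n), deg (varsSum L) ≤ lam →
      RedDefined B H ρ L ∧
      ∀ m' ∈ (redList B H ρ L).support, deg m' ≤ deg (varsSum L)) := by
  have hmono : ∀ (i : Fin n) (L : List (Fin n)),
      deg (varsSum L) ≤ deg (varsSum (i :: L)) := by
    intro i L
    have h0 : deg (0 : Mon n) < deg (Finsupp.single i 1) := by
      refine hredgrad _ _ ?_ ?_
      · intro j; simp
      · exact fun h => one_ne_zero (Finsupp.single_eq_zero.1 h.symm)
    have h1 : deg (varsSum L) = deg (0 : Mon n) + deg (varsSum L) := by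
      rw [← hdeg]; simp
    rw [varsSum_cons, hdeg]
    calc deg (varsSum L) = deg (0 : Mon n) + deg (varsSum L) := h1
      _ ≤ deg (Finsupp.single i 1) + deg (varsSum L) := add_le_add_left h0.le _
  have key : ∀ L : List (Fin n), deg (varsSum L) ≤ lam →
      RedDefined B H ρ L ∧
      ∀ m' ∈ (redList B H ρ L).support, m' ∈ B ∧ deg m' ≤ deg (varsSum L) := by
    intro L
    induction L with
    | nil =>
      intro _
      refine ⟨trivial, ?_⟩
      intro m' hm'
      have : m' = 0 := by
        rw [show redList B H ρ ([] : List (Fin n)) = 1 from rfl,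
          MvPolynomial.mem_support_iff, MvPolynomial.coeff_one] at hm'
        by_contra h
        simp [h, eq_comm] at hm'
      subst this
      exact ⟨hB.1, le_refl _⟩
    | cons i L IH =>
      intro hlam
      have hL : deg (varsSum L) ≤ lam := (hmono i L).trans hlam
      obtain ⟨hRD, hp⟩ := IH hL
      -- support of X i * redList
      have hX : ∀ m' ∈ (X i * redList B H ρ L).support,
          m' ∈ (B ∪ H) ∧ deg m' ≤ deg (varsSum (i :: L)) := by
        intro m' hm'
        obtain ⟨m, hm, rfl⟩ := Xmul_support_sub i _ m' hm'
        obtain ⟨hmB, hmdeg⟩ := hp m hm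
        have hdegm' : deg (Finsupp.single i 1 + m) ≤ deg (varsSum (i :: L)) := by
          rw [hdeg, varsSum_cons, hdeg]
          exact add_le_add_right hmdeg _
        refine ⟨?_, hdegm'⟩
        have hpro : Finsupp.single i 1 + m ∈ prolong B := by
          right
          exact Set.mem_iUnion.2 ⟨i, ⟨m, hmB, rfl⟩⟩
        by_cases hB' : Finsupp.single i 1 + m ∈ B
        · exact Or.inl hB'
        · exact Or.inr (hredfam _ ⟨hpro, hB'⟩ (hdegm'.trans hlam))
      have hDef : DefinedOn B H (X i * redList B H ρ L) :=
        fun m' hm' => (hX m' hm').1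
      refine ⟨⟨hRD, hDef⟩, ?_⟩
      intro m'' hm''
      obtain ⟨m', hm', hcase⟩ := piF_support_sub B H ρ _ m'' hm''
      have hX' := hX m' hm'
      rcases hcase with ⟨hmB, rfl⟩ | ⟨hmH, hρm⟩
      · exact ⟨hmB, hX'.2⟩
      · exact ⟨hρ m' hmH hρm, (hlead m' hmH _ hρm).trans hX'.2⟩
  refine ⟨?_, fun L hL => ⟨(key L hL).1, fun m' hm' => ((key L hL).2 m' hm').2⟩⟩
  intro m hm L hLm
  exact (key L (by rw [hLm]; exact hm)).1
end

section
/- Let F = (f_ω)_{ω ∈ ∂B} be a border basis for B connected to 1, with commuting multiplication operators, and let π^e_F be the induced global projection. For any monomial m = x_{i_1}···x_{i_k}, the reduction admits the decomposition m − π^e_F(m) = Σ_{l=1}^{k} x_{i_1}···x_{i_{l-1}} Σ_{ω ∈ ∂B} μ^{i_l}_{x_{i_{l+1}}···x_{i_k}, ω} f_ω, where for b ∈ ⟨B⟩, x_i b − π_F(x_i b) = Σ_ω μ^i_{b,ω} f_ω with μ^i_{b,ω} ∈ K. In particular m − π^e_F(m) lies in the K[x]-module generated by F with explicitly bounded-degree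 coefficients (each coefficient has total degree < k). -/
open MvPolynomial
open scoped Classical

section Helpers

variable {n : ℕ} {K : Type} [Field K]

lemma prolong_eq_union (B : Set (Mon n)) : B ∪ border B = prolong B := by
  have hsub : B ⊆ prolong B := Set.subset_union_left
  rw [border, Set.union_diff_cancel hsub]

lemma degSum_add (a b : Mon n) : degSum (a + b) = degSum a + degSum b := by
  classical
  exact Finsupp.sum_add_index' (fun _ => rfl) (fun _ _ _ => rfl)

lemma degSum_varsSum (L : List (Fin n)) : degSum (varsSum L) = L.length := by
  induction L with
  | nil => simp [varsSum, degSum]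
  | cons i L ih =>
    have h : varsSum (i :: L) = Finsupp.single i 1 + varsSum L := by
      simp [varsSum]
    rw [h, degSum_add, ih]
    simp [degSum, Finsupp.sum_single_index]
    omega

lemma supp_piF (B : Set (Mon n)) (ρ : Mon n → MvPolynomial (Fin n) K)
    (hρ : ∀ ω ∈ border B, ↑(ρ ω).support ⊆ B) (p : MvPolynomial (Fin n) K) :
    ↑(piF B (border B) ρ p).support ⊆ B := by
  classical
  intro m hm
  have := MvPolynomial.support_sum (s := p.support)
    (f := fun m => if m ∈ B then monomial m (p.coeff m)
      else if m ∈ border B then p.coeff m • ρ m else 0) hm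
  rw [Finset.mem_biUnion] at this
  obtain ⟨x, hx, hmx⟩ := this
  by_cases hxB : x ∈ B
  · simp only [hxB, if_true] at hmx
    have := MvPolynomial.support_monomial_subset hmx
    simp only [Finset.mem_singleton] at this
    rwa [this]
  · by_cases hxH : x ∈ border B
    · simp only [hxB, hxH, if_true, if_false] at hmx
      have h2 : m ∈ (ρ x).support := Finsupp.support_smul hmx
      exact hρ x hxH h2
    · simp [hxB, hxH] at hmx

lemma supp_redList (B : Set (Mon n)) (ρ : Mon n → MvPolynomial (Fin n) K)
    (h0 : (0 : Mon n) ∈ B) (hρ : ∀ ω ∈ border B, ↑(ρ ω).support ⊆ B) :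
    ∀ L : List (Fin n), ↑(redList B (border B) ρ L).support ⊆ B
  | [] => by
    intro m hm
    have h1 : (redList B (border B) ρ ([] : List (Fin n))) = monomial 0 (1 : K) := by
      simp [redList, MvPolynomial.monomial_zero']
    rw [h1] at hm
    have := MvPolynomial.support_monomial_subset (Finset.mem_coe.1 hm)
    rw [Finset.mem_singleton] at this
    rwa [this]
  | i :: L => by
    exact supp_piF B ρ hρ _

lemma supp_X_mul (B : Set (Mon n)) {r : MvPolynomial (Fin n) K}
    (hr : ↑r.support ⊆ B) (i : Fin n) :
    ↑(X i * r).support ⊆ B ∪ border B := by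
  rw [prolong_eq_union]
  intro m hm
  simp only [Finset.mem_coe, MvPolynomial.support_X_mul, Finset.mem_map,
    addLeftEmbedding_apply] at hm
  obtain ⟨a, ha, rfl⟩ := hm
  exact Set.mem_union_right _ (Set.mem_iUnion.2 ⟨i, ⟨a, hr (Finset.mem_coe.2 ha), rfl⟩⟩)

lemma sub_piF (B : Set (Mon n)) (ρ : Mon n → MvPolynomial (Fin n) K)
    (p : MvPolynomial (Fin n) K) (hp : ↑p.support ⊆ B ∪ border B) :
    p - piF B (border B) ρ p =
      ∑ ω ∈ p.support,
        if ω ∈ border B then (p.coeff ω) • (monomial ω (1 : K) - ρ ω) else 0 := by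
  classical
  rw [piF]
  nth_rewrite 1 [show p = ∑ m ∈ p.support, monomial m (p.coeff m) from
    (MvPolynomial.support_sum_monomial_coeff p).symm]
  rw [← Finset.sum_sub_distrib]
  refine Finset.sum_congr rfl fun m hm => ?_
  have hmem := hp hm
  by_cases hB : m ∈ B
  · have hnb : m ∉ border B := fun h => h.2 hB
    simp [hB, hnb]
  · have hH : m ∈ border B := hmem.resolve_left hB
    simp [hB, hH, smul_sub, MvPolynomial.smul_monomial]

lemma fin_sum_cons {α : Type*} {M : Type*} [AddCommMonoid M] (a : α) (L : List α)
    (F : Fin ((a :: L).length) → M) :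
    ∑ l, F l = F ⟨0, Nat.succ_pos _⟩ +
      ∑ l : Fin L.length, F ⟨(l : ℕ) + 1, Nat.succ_lt_succ l.isLt⟩ :=
  Fin.sum_univ_succ F

lemma eq1 (B : Set (Mon n)) (ρ : Mon n → MvPolynomial (Fin n) K)
    (h0 : (0 : Mon n) ∈ B) (hρ : ∀ ω ∈ border B, ↑(ρ ω).support ⊆ B) :
    ∀ L : List (Fin n),
      monomial (varsSum L) (1 : K) - redList B (border B) ρ L =
        ∑ l : Fin L.length,
          (monomial (varsSum (L.take (l : ℕ))) (1 : K)) *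
            ∑ ω ∈ (X (L.get l) * redList B (border B) ρ (L.drop ((l : ℕ) + 1))).support,
              if ω ∈ border B then
                ((X (L.get l) * redList B (border B) ρ (L.drop ((l : ℕ) + 1))).coeff ω) •
                  (monomial ω (1 : K) - ρ ω)
              else 0 := by
  intro L
  induction L with
  | nil => simp [varsSum, redList]
  | cons i L ih =>
    have hv : varsSum (i :: L) = Finsupp.single i 1 + varsSum L := by simp [varsSum]
    have hX : (monomial (Finsupp.single i 1 + varsSum L) (1 : K)) =
        X i * monomial (varsSum L) 1 := by
      rw [MvPolynomial.X, MvPolynomial.monomial_mul, one_mul]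
    have hsupp : ↑(X i * redList B (border B) ρ L).support ⊆ B ∪ border B :=
      supp_X_mul B (supp_redList B ρ h0 hρ L) i
    have hA := sub_piF B ρ (X i * redList B (border B) ρ L) hsupp
    rw [hv, hX, show redList B (border B) ρ (i :: L) =
        piF B (border B) ρ (X i * redList B (border B) ρ L) from rfl]
    rw [fin_sum_cons]
    simp only [List.get, List.take, List.drop, varsSum, List.map_nil, List.sum_nil,
      List.map_cons, List.sum_cons, MvPolynomial.monomial_zero', map_one, one_mul]
    simp only [Fin.eta]
    rw [← hA]
    have hmono : ∀ s : Mon n, (monomial ((Finsupp.single i 1) + s) (1 : K)) =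
        X i * monomial s 1 := fun s => by
      rw [MvPolynomial.X, MvPolynomial.monomial_mul, one_mul]
    simp only [hmono, mul_assoc]
    rw [← Finset.mul_sum]
    simp only [varsSum] at ih
    rw [← ih]
    ring

end Helpers

/-- decomposition of m − π^e_F(m) along a border basis (equation (5)):
    m − π^e_F(m) = Σ_{l} x_{i₁}···x_{i_{l-1}} Σ_ω μ^{i_l}_{x_{i_{l+1}}···x_{i_k},ω} f_ω,
    and in particular the coefficients have total degree < k. -/
theorem stmt11 {n : ℕ} {K : Type} [Field K] (B : Set (Mon n))
    (ρ : Mon n → MvPolynomial (Fin n) K)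
    (hB : ConnectedTo1 B)
    (hρ : ∀ ω ∈ border B, ↑(ρ ω).support ⊆ B)
    (hcomm : ∀ b ∈ spanMon K B, ∀ i j : Fin n,
      piF B (border B) ρ (X i * piF B (border B) ρ (X j * b)) =
      piF B (border B) ρ (X j * piF B (border B) ρ (X i * b))) :
    ∀ L : List (Fin n),
      (monomial (varsSum L) (1 : K) - redList B (border B) ρ L =
        ∑ l : Fin L.length,
          (monomial (varsSum (L.take (l : ℕ))) (1 : K)) *
            ∑ ω ∈ (X (L.get l) * redList B (border B) ρ (L.drop ((l : ℕ) + 1))).support,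
              if ω ∈ border B then
                ((X (L.get l) * redList B (border B) ρ (L.drop ((l : ℕ) + 1))).coeff ω) •
                  (monomial ω (1 : K) - ρ ω)
              else 0) ∧
      ∃ (s : Finset (Mon n)) (c : Mon n → MvPolynomial (Fin n) K),
        ↑s ⊆ border B ∧ (∀ ω ∈ s, (c ω).totalDegree < L.length) ∧
        monomial (varsSum L) (1 : K) - redList B (border B) ρ L =
          ∑ ω ∈ s, c ω * (monomial ω 1 - ρ ω) := by
  classical
  intro L
  refine ⟨eq1 B ρ hB.1 hρ L, ?_⟩
  by_cases hL : L.length = 0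
  · obtain rfl : L = [] := List.length_eq_zero_iff.1 hL
    refine ⟨∅, fun _ => 0, by simp, by simp, ?_⟩
    rw [eq1 B ρ hB.1 hρ []]
    simp
  · have hpos : 0 < L.length := Nat.pos_of_ne_zero hL
    set r := redList B (border B) ρ with hr
    set T : Fin L.length → Finset (Mon n) := fun l =>
      ((X (L.get l) * r (L.drop ((l : ℕ) + 1))).support.filter (· ∈ border B)) with hT
    refine ⟨Finset.univ.biUnion T, fun ω => ∑ l : Fin L.length,
      if ω ∈ T l then monomial (varsSum (L.take (l : ℕ))) (1 : K) *
        C ((X (L.get l) * r (L.drop ((l : ℕ) + 1))).coeff ω) else 0, ?_, ?_, ?_⟩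
    · intro ω hω
      simp only [Finset.coe_biUnion, Set.mem_iUnion, Finset.mem_coe] at hω
      obtain ⟨l, _, hl⟩ := hω
      exact (Finset.mem_filter.1 hl).2
    · intro ω _
      refine lt_of_le_of_lt (MvPolynomial.totalDegree_finset_sum _ _) ?_
      rw [Finset.sup_lt_iff (by simpa using hpos)]
      intro l _
      by_cases hmem : ω ∈ T l
      · rw [if_pos hmem]
        refine lt_of_le_of_lt (MvPolynomial.totalDegree_mul _ _) ?_
        rw [MvPolynomial.totalDegree_C, add_zero,
          MvPolynomial.totalDegree_monomial _ (one_ne_zero)]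
        have : degSum (varsSum (L.take (l : ℕ))) = (L.take (l : ℕ)).length := degSum_varsSum _
        rw [show (varsSum (L.take (l : ℕ))).sum (fun _ e => e) =
          degSum (varsSum (L.take (l : ℕ))) from rfl, this, List.length_take]
        exact lt_of_le_of_lt (min_le_left _ _) l.isLt
      · rw [if_neg hmem]
        simpa using hpos
    · rw [eq1 B ρ hB.1 hρ L, ← hr]
      simp only [Finset.sum_mul, ite_mul, zero_mul]
      rw [Finset.sum_comm]
      refine Finset.sum_congr rfl fun l _ => ?_
      rw [Finset.mul_sum, Finset.sum_ite_mem,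
        Finset.inter_eq_right.2 (Finset.subset_biUnion_of_mem T (Finset.mem_univ l)),
        show T l = ((X (L.get l) * r (L.drop ((l : ℕ) + 1))).support.filter
          (· ∈ border B)) from rfl,
        Finset.sum_filter]
      refine Finset.sum_congr rfl fun ω hω => ?_
      by_cases hb : ω ∈ border B
      · simp only [hb, if_true, MvPolynomial.smul_eq_C_mul]
        ring
      · simp [hb]
end
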